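/- Under the allocation rule Y(p) = λ/p and the reimbursement function Φ(p) = Σ_n λ_n²/p_n, a PoI maximizing Φ(p) - C(y) subject to y_n = λ_n/p_n chooses, at any interior optimum, bids satisfying p_n = (1/y_n)·∂C/∂y_n(y) where y_n = λ_n/p_n; i.e., the PoI's first-order condition is equivalent to this truthfulness identity. -/

import Mathlib

open Finset

/-- Under allocation `y_n = λ_n/p_n` and reimbursement
`Φ(p) = Σ_n λ_n²/p_n`, the first-order condition of the PoI's bidding problem
(maximize `Φ(p) - C(y(p))`) at an interior point `p` is equivalent to the
truthfulness identity `p_n = (1/y_n)·∂C/∂y_n(y)`. -/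
theorem poi_bidding_foc_iff_truthful (N : ℕ)
    (C : (Fin N → ℝ) → ℝ) (hC : Differentiable ℝ C)
    (hCconv : ConvexOn ℝ Set.univ C)
    (lam : Fin N → ℝ) (hlam : ∀ n, 0 < lam n)
    (p : Fin N → ℝ) (hp : ∀ n, 0 < p n)
    (y : Fin N → ℝ) (hy : y = fun n => lam n / p n) :
    ((∀ n, fderiv ℝ
        (fun b : Fin N → ℝ =>
          (∑ m, (lam m) ^ 2 / b m) - C (fun m => lam m / b m))
        p (Pi.single n 1) = 0)
      ↔
     (∀ n, p n = (1 / y n) * fderiv ℝ C y (Pi.single n 1))) := by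
  subst hy
  have hpne : ∀ n, p n ≠ 0 := fun n => (hp n).ne'
  have hlamne : ∀ n, lam n ≠ 0 := fun n => (hlam n).ne'
  -- derivative of each coordinate inverse
  have hinv : ∀ m : Fin N, HasFDerivAt (fun b : Fin N → ℝ => (b m)⁻¹)
      ((ContinuousLinearMap.smulRight (1 : ℝ →L[ℝ] ℝ) (-((p m) ^ 2)⁻¹)).comp
        (ContinuousLinearMap.proj m)) p := fun m =>
    (hasFDerivAt_inv (hpne m)).comp p (hasFDerivAt_apply m p)
  -- derivative of the allocation map g
  set L : (Fin N → ℝ) →L[ℝ] (Fin N → ℝ) :=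
    ContinuousLinearMap.pi (fun m =>
      (-(lam m) / (p m) ^ 2) • (ContinuousLinearMap.proj m : (Fin N → ℝ) →L[ℝ] ℝ)) with hLdef
  have hg : HasFDerivAt (fun b : Fin N → ℝ => fun m => lam m / b m) L p := by
    rw [hasFDerivAt_pi']
    intro m
    simp only [div_eq_mul_inv]
    have hEq : (ContinuousLinearMap.proj m).comp L
        = (lam m) • ((ContinuousLinearMap.smulRight (1 : ℝ →L[ℝ] ℝ) (-((p m) ^ 2)⁻¹)).comp
            (ContinuousLinearMap.proj m)) := by
      ext v
      simp [hLdef, ContinuousLinearMap.proj_pi, div_eq_mul_inv]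
      ring
    rw [hEq]
    exact (hinv m).const_mul (lam m)
  -- derivative of the reimbursement Φ
  set F' : (Fin N → ℝ) →L[ℝ] ℝ :=
    ∑ m, ((lam m) ^ 2) •
      ((ContinuousLinearMap.smulRight (1 : ℝ →L[ℝ] ℝ) (-((p m) ^ 2)⁻¹)).comp
        (ContinuousLinearMap.proj m)) with hF'def
  have hF : HasFDerivAt (fun b : Fin N → ℝ => ∑ m, (lam m) ^ 2 / b m) F' p := by
    simp only [div_eq_mul_inv]
    exact HasFDerivAt.fun_sum (fun m (_ : m ∈ Finset.univ) => (hinv m).const_mul ((lam m) ^ 2))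
  -- derivative of C at y
  have hCy : HasFDerivAt C (fderiv ℝ C (fun m => lam m / p m)) (fun m => lam m / p m) :=
    (hC _).hasFDerivAt
  have htot : HasFDerivAt
      (fun b : Fin N → ℝ => (∑ m, (lam m) ^ 2 / b m) - C (fun m => lam m / b m))
      (F' - (fderiv ℝ C (fun m => lam m / p m)).comp L) p :=
    hF.sub (hCy.comp p hg)
  have hL : ∀ n, L (Pi.single n 1) = (-(lam n) / (p n) ^ 2) • (Pi.single n 1 : Fin N → ℝ) := by
    intro n
    funext m
    by_cases h : m = n
    · subst h; simp [hLdef, ContinuousLinearMap.proj_pi]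
    · simp [hLdef, ContinuousLinearMap.proj_pi, Pi.single_apply, h]
  have hval : ∀ n, fderiv ℝ
      (fun b : Fin N → ℝ => (∑ m, (lam m) ^ 2 / b m) - C (fun m => lam m / b m))
      p (Pi.single n 1)
      = -((lam n) ^ 2 / (p n) ^ 2)
        + (lam n / (p n) ^ 2) * fderiv ℝ C (fun m => lam m / p m) (Pi.single n 1) := by
    intro n
    rw [htot.fderiv]
    have h1 : F' (Pi.single n 1) = -((lam n) ^ 2 / (p n) ^ 2) := by
      simp [hF'def, ContinuousLinearMap.sum_apply, Pi.single_apply,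
        Finset.sum_ite_eq', div_eq_mul_inv]
    have h2 : (fderiv ℝ C (fun m => lam m / p m)).comp L (Pi.single n 1)
        = (-(lam n) / (p n) ^ 2) * fderiv ℝ C (fun m => lam m / p m) (Pi.single n 1) := by
      simp [ContinuousLinearMap.comp_apply, hL n, map_smul, smul_eq_mul]
    simp only [ContinuousLinearMap.sub_apply, h1, h2]
    ring
  constructor
  · intro h n
    have hn := h n
    rw [hval n] at hn
    have hD : fderiv ℝ C (fun m => lam m / p m) (Pi.single n 1) = lam n := by
      have hp2 : (0:ℝ) < (p n) ^ 2 := pow_pos (hp n) 2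
      have h4 : lam n * (fderiv ℝ C (fun m => lam m / p m) (Pi.single n 1) - lam n) = 0 := by
        have h5 : lam n * (fderiv ℝ C (fun m => lam m / p m) (Pi.single n 1) - lam n)
            = (-(lam n ^ 2 / p n ^ 2)
               + lam n / p n ^ 2 * fderiv ℝ C (fun m => lam m / p m) (Pi.single n 1)) * p n ^ 2 := by
          rw [add_mul, neg_mul, div_mul_cancel₀ _ hp2.ne', mul_right_comm, div_mul_cancel₀ _ hp2.ne']
          ring
        rw [h5, hn, zero_mul]
      rcases mul_eq_zero.1 h4 with h | h
      · exact absurd h (hlamne n)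
      · linarith
    rw [hD]
    rw [one_div_div, div_mul_cancel₀ _ (hlamne n)]
  · intro h n
    have hn := h n
    simp only [one_div_div] at hn
    have hD : fderiv ℝ C (fun m => lam m / p m) (Pi.single n 1) = lam n := by
      rw [div_mul_eq_mul_div, eq_div_iff (hlamne n)] at hn
      exact (mul_left_cancel₀ (hpne n) hn.symm)
    rw [hval n, hD]
    ring
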